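/- Let λ∈(3/4, 1) and f(n) = n^λ + 1 for n∈ℕ. Then f∈𝓜_s(1); in fact, for any α∈(1+2λ, 6λ−2), the choice g(n) = n^α + 1 witnesses the defining conditions of 𝓜_s(1). -/

import Mathlib

open Filter Topology
open scoped ENNReal

noncomputable section

abbrev l2 : Type := lp (fun _ : ℕ => ℂ) 2

def xi (n : ℕ) : l2 := lp.single 2 n 1

def FinSupp (φ : l2) : Prop := (Function.support (⇑φ : ℕ → ℂ)).Finite

/-- The class 𝒦. -/
def MemK (f : ℕ → ℝ) : Prop := 0 < f 0 ∧ ∀ n, f n < f (n + 1)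

/-- The class 𝒦⁻. -/
def MemKminus (f : ℕ → ℝ) : Prop := MemK f ∧ Summable (fun n => 1 / (f n) ^ 2)

def fsq (f : ℕ → ℝ) : ℕ → ℝ := fun n => (f n) ^ 2

/-- the sequence of the multiplication operator `f(N)` applied to φ -/
def mulSeq (f : ℕ → ℝ) (φ : ℕ → ℂ) : ℕ → ℂ := fun n => ((f n : ℝ) : ℂ) * φ n

/-- the sequence of `f(N)^p` applied to φ -/
def powSeq (f : ℕ → ℝ) (p : ℕ) (φ : ℕ → ℂ) : ℕ → ℂ := fun n => (((f n) ^ p : ℝ) : ℂ) * φ n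

/-- coordinates of `T_{f,m} φ`. -/
def TfmSeq (f : ℕ → ℝ) (m : ℕ) (φ : ℕ → ℂ) : ℕ → ℂ := fun n =>
  Complex.I * ∑ k ∈ Finset.Icc 1 m,
    ((if k ≤ n then φ (n - k) / ((f n - f (n - k) : ℝ) : ℂ) else 0)
      - φ (n + k) / ((f (n + k) - f n : ℝ) : ℂ))

/-- `(φ, ψ)` is in the graph of `T_f`. -/
def InGraphTf (f : ℕ → ℝ) (φ ψ : l2) : Prop :=
  ∃ h : ∀ m, Memℓp (TfmSeq f m (⇑φ)) 2,
    Tendsto (fun m => (⟨TfmSeq f m (⇑φ), h m⟩ : l2)) atTop (𝓝 ψ)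


/-- The conditions that `g, h` witness membership of `f` in `𝓜(β)`:
`g : ℕ → (0,∞)`, `h ∈ ℓ¹(ℕ_{≥1})`, `∑_n f(n)²/g(n) < ∞`, and
`g(n) / (f(n)^β Δ_k(f², n))² ≤ h(k)²` for all `n` and all `k ≥ 1`. -/
def MWitness (β : ℝ) (f g h : ℕ → ℝ) : Prop :=
  (∀ n, 0 < g n) ∧
  Summable (fun k : ℕ => |h (k + 1)|) ∧
  Summable (fun n => (f n) ^ 2 / g n) ∧
  ∀ n k : ℕ, 1 ≤ k →
    g n / (Real.rpow (f n) β * ((f (n + k)) ^ 2 - (f n) ^ 2)) ^ 2 ≤ (h k) ^ 2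

/-- The class `𝓜(β)`. -/
def MemM (β : ℝ) (f : ℕ → ℝ) : Prop := MemKminus f ∧ ∃ g h : ℕ → ℝ, MWitness β f g h

/-- The class `𝓜_s(β)`: as `𝓜(β)`, with a uniform bound `C` on the sums
`∑_{k=1}^n g(n) / (f(n-k)^β (f(n)² - f(n-k)²))²` for the same witness `g`. -/
def MemMs (β : ℝ) (f : ℕ → ℝ) : Prop :=
  MemKminus f ∧ ∃ g h : ℕ → ℝ, MWitness β f g h ∧
    ∃ C : ℝ, 0 < C ∧ ∀ n : ℕ,
      (∑ k ∈ Finset.Icc 1 n,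
        g n / (Real.rpow (f (n - k)) β * ((f n) ^ 2 - (f (n - k)) ^ 2)) ^ 2) < C



/-- summability helper -/
lemma sum_helper (c p : ℝ) (hp : 1 < p) {F : ℕ → ℝ} (h0 : ∀ n, 0 ≤ F n)
    (hle : ∀ n : ℕ, 1 ≤ n → F n ≤ c * ((n : ℝ) ^ p)⁻¹) : Summable F := by
  rw [← summable_nat_add_iff 1]
  have hs : Summable (fun n : ℕ => c * (((n + 1 : ℕ) : ℝ) ^ p)⁻¹) :=
    ((summable_nat_add_iff 1).2 (Real.summable_nat_rpow_inv.2 hp)).mul_left c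
  exact Summable.of_nonneg_of_le (fun n => h0 _) (fun n => hle (n + 1) (Nat.le_add_left 1 n)) hs

/-- tangent line inequality for concave rpow -/
lemma tangent (lam : ℝ) (hl0 : 0 < lam) (hl1 : lam ≤ 1) {x y : ℝ} (hx : 0 ≤ x) (hxy : x ≤ y) :
    lam * (y - x) * y ^ lam ≤ (y ^ lam - x ^ lam) * y := by
  rcases eq_or_lt_of_le (hx.trans hxy) with hy | hy
  · rw [← hy]
    have hx0 : x = 0 := le_antisymm (hy ▸ hxy) hx
    simp [hx0, Real.zero_rpow (ne_of_gt hl0)]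
  · have ht : x / y ≤ 1 := (div_le_one hy).2 hxy
    have ht0 : 0 ≤ x / y := div_nonneg hx hy.le
    have key : (x / y) ^ lam * 1 ^ (1 - lam) ≤ lam * (x / y) + (1 - lam) * 1 :=
      Real.geom_mean_le_arith_mean2_weighted hl0.le (by linarith) ht0 zero_le_one (by ring)
    rw [Real.one_rpow, mul_one, mul_one] at key
    have hdiv : (x / y) ^ lam = x ^ lam / y ^ lam := Real.div_rpow hx hy.le lam
    rw [hdiv] at key
    have hyl : 0 < y ^ lam := Real.rpow_pos_of_pos hy lam
    -- key : x^lam / y^lam ≤ lam * (x/y) + (1 - lam)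
    have k2 : x ^ lam ≤ (lam * (x / y) + (1 - lam)) * y ^ lam := by
      rw [div_le_iff₀ hyl] at key; linarith
    have k3 : x ^ lam * y ≤ (lam * x + (1 - lam) * y) * y ^ lam := by
      have h4 := mul_le_mul_of_nonneg_right k2 (le_of_lt hy)
      have h5 : (lam * (x / y) + (1 - lam)) * y ^ lam * y = (lam * x + (1 - lam) * y) * y ^ lam := by
        field_simp
      linarith [h4, h5.le, h5.ge]
    nlinarith [Real.rpow_pos_of_pos hy lam]


lemma key1 (lam α : ℝ) (hl1 : 3/4 < lam) (hl2 : lam < 1)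
    (ha1 : 1 + 2*lam < α) (ha2 : α < 6*lam - 2) (n k : ℕ) (hk : 1 ≤ k) :
    ((n:ℝ)^α + 1) * ((k:ℝ)^(6*lam - α - 2)) * ((n:ℝ)+(k:ℝ))^2
      ≤ 2 * ((n:ℝ)^lam + 1)^2 * ((((n:ℝ)+(k:ℝ))^lam)^4) := by
  have hl0 : 0 < lam := by linarith
  have hkpos : (0:ℝ) < k := by exact_mod_cast hk
  have hk1 : (1:ℝ) ≤ k := by exact_mod_cast hk
  rcases Nat.eq_zero_or_pos n with hn | hn
  · subst hn
    simp only [Nat.cast_zero, zero_add]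
    rw [Real.zero_rpow (ne_of_gt (by linarith : (0:ℝ) < α)),
        Real.zero_rpow (ne_of_gt hl0)]
    have h2 : (((k:ℝ)^lam))^4 = (k:ℝ)^(lam*4) := by
      rw [← Real.rpow_natCast ((k:ℝ)^lam) 4, ← Real.rpow_mul hkpos.le]; norm_num
    have h3 : (k:ℝ)^(6*lam - α - 2) * (k:ℝ)^2 = (k:ℝ)^(6*lam-α) := by
      rw [← Real.rpow_natCast (k:ℝ) 2, ← Real.rpow_add hkpos]; norm_num
    have h4 : (k:ℝ)^(6*lam-α) ≤ (k:ℝ)^(lam*4) :=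
      Real.rpow_le_rpow_of_exponent_le hk1 (by linarith)
    have h5 : 0 ≤ (k:ℝ)^(lam*4) := Real.rpow_nonneg hkpos.le _
    rw [h2]
    nlinarith [h3, h4, h5]
  · have hn1 : (1:ℝ) ≤ n := by exact_mod_cast hn
    have hnpos : (0:ℝ) < n := by linarith
    set N : ℝ := (n:ℝ) + (k:ℝ) with hN
    have hNpos : 0 < N := by positivity
    have hnN : (n:ℝ) ≤ N := le_add_of_nonneg_right hkpos.le
    have hkN : (k:ℝ) ≤ N := le_add_of_nonneg_left hnpos.le
    have eA : (n:ℝ)^α + 1 ≤ 2 * (n:ℝ)^α := by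
      have := Real.one_le_rpow hn1 (by linarith : (0:ℝ) ≤ α); linarith
    have e1 : (n:ℝ)^α = (n:ℝ)^(2*lam) * (n:ℝ)^(α-2*lam) := by
      rw [← Real.rpow_add hnpos]; ring_nf
    have e2 : ((n:ℝ)^lam)^2 = (n:ℝ)^(2*lam) := by
      rw [← Real.rpow_natCast ((n:ℝ)^lam) 2, ← Real.rpow_mul hnpos.le]; ring_nf
    have e3 : (N^lam)^4 = N^(4*lam-2) * N^2 := by
      rw [← Real.rpow_natCast (N^lam) 4, ← Real.rpow_mul hNpos.le,
          ← Real.rpow_natCast N 2, ← Real.rpow_add hNpos]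
      norm_num
      ring_nf
    have c1 : (n:ℝ)^(α-2*lam) ≤ N^(α-2*lam) :=
      Real.rpow_le_rpow hnpos.le hnN (by linarith)
    have c2 : (k:ℝ)^(6*lam-α-2) ≤ N^(6*lam-α-2) :=
      Real.rpow_le_rpow hkpos.le hkN (by linarith)
    have c3 : N^(α-2*lam) * N^(6*lam-α-2) = N^(4*lam-2) := by
      rw [← Real.rpow_add hNpos]; ring_nf
    have main : (n:ℝ)^(α-2*lam) * (k:ℝ)^(6*lam-α-2) ≤ N^(4*lam-2) := by
      calc (n:ℝ)^(α-2*lam) * (k:ℝ)^(6*lam-α-2)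
          ≤ N^(α-2*lam) * N^(6*lam-α-2) :=
            mul_le_mul c1 c2 (Real.rpow_nonneg hkpos.le _) (Real.rpow_nonneg hNpos.le _)
        _ = N^(4*lam-2) := c3
    -- assemble
    have hna : 0 ≤ (n:ℝ)^α := Real.rpow_nonneg hnpos.le _
    have hke : 0 ≤ (k:ℝ)^(6*lam-α-2) := Real.rpow_nonneg hkpos.le _
    have hn2l : 0 ≤ (n:ℝ)^(2*lam) := Real.rpow_nonneg hnpos.le _
    have hnl : 0 ≤ (n:ℝ)^lam := Real.rpow_nonneg hnpos.le _
    have hN42 : 0 ≤ N^(4*lam-2) := Real.rpow_nonneg hNpos.le _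
    have step1 : ((n:ℝ)^α + 1) * ((k:ℝ)^(6*lam-α-2)) ≤ 2 * ((n:ℝ)^lam+1)^2 * N^(4*lam-2) := by
      calc ((n:ℝ)^α + 1) * ((k:ℝ)^(6*lam-α-2))
          ≤ (2 * (n:ℝ)^α) * ((k:ℝ)^(6*lam-α-2)) := by
            apply mul_le_mul_of_nonneg_right eA hke
        _ = 2 * (n:ℝ)^(2*lam) * ((n:ℝ)^(α-2*lam) * (k:ℝ)^(6*lam-α-2)) := by
            rw [e1]; ring
        _ ≤ 2 * (n:ℝ)^(2*lam) * N^(4*lam-2) := by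
            apply mul_le_mul_of_nonneg_left main (by linarith)
        _ ≤ 2 * ((n:ℝ)^lam+1)^2 * N^(4*lam-2) := by
            apply mul_le_mul_of_nonneg_right _ hN42
            nlinarith [e2]
    calc ((n:ℝ)^α + 1) * ((k:ℝ)^(6*lam-α-2)) * N^2
        ≤ (2 * ((n:ℝ)^lam+1)^2 * N^(4*lam-2)) * N^2 := by
          apply mul_le_mul_of_nonneg_right step1 (by positivity)
      _ = 2 * ((n:ℝ)^lam+1)^2 * ((N^lam)^4) := by rw [e3]; ring

lemma cond4 (lam α : ℝ) (hl1 : 3/4 < lam) (hl2 : lam < 1)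
    (ha1 : 1 + 2*lam < α) (ha2 : α < 6*lam - 2) (n k : ℕ) (hk : 1 ≤ k) :
    ((n:ℝ)^α + 1) /
      (Real.rpow ((n:ℝ)^lam + 1) 1 * ((((n+k:ℕ):ℝ)^lam + 1)^2 - ((n:ℝ)^lam + 1)^2))^2
      ≤ (Real.sqrt 2 / lam * ((k:ℝ)^(3*lam - α/2))⁻¹)^2 := by
  have hl0 : 0 < lam := by linarith
  have hkpos : (0:ℝ) < k := by exact_mod_cast hk
  have hNcast : ((n+k:ℕ):ℝ) = (n:ℝ) + (k:ℝ) := by push_cast; ring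
  rw [show Real.rpow ((n:ℝ)^lam + 1) 1 = ((n:ℝ)^lam + 1) from Real.rpow_one _, hNcast]
  set N : ℝ := (n:ℝ) + (k:ℝ) with hNdef
  set x : ℝ := (n:ℝ)^lam with hxdef
  set y : ℝ := N^lam with hydef
  have hNpos : 0 < N := by positivity
  have hx0 : 0 ≤ x := Real.rpow_nonneg (Nat.cast_nonneg n) _
  have hy0 : 0 < y := Real.rpow_pos_of_pos hNpos _
  have hxy : x < y := by
    apply Real.rpow_lt_rpow (Nat.cast_nonneg n) _ hl0
    linarith
  set Δ : ℝ := (y+1)^2 - (x+1)^2 with hΔdef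
  have hΔpos : 0 < Δ := by nlinarith
  set D : ℝ := (x+1) * Δ with hDdef
  have hDpos : 0 < D := by positivity
  have t1 : lam * ((k:ℝ)) * y ≤ (y - x) * N := by
    have := tangent lam hl0 hl2.le (Nat.cast_nonneg n) (by linarith : (n:ℝ) ≤ N)
    have hsub : N - (n:ℝ) = (k:ℝ) := by simp [hNdef]
    rw [hsub] at this
    calc lam * (k:ℝ) * y = lam * (k:ℝ) * N^lam := by rw [hydef]
      _ ≤ (N^lam - (n:ℝ)^lam) * N := this
      _ = (y - x) * N := by rw [hydef, hxdef]
  have hD : lam * (k:ℝ) * y^2 * (x+1) ≤ D * N := by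
    have t2 : lam * (k:ℝ) * y^2 ≤ Δ * N := by
      have e : Δ = (y - x) * (y + x + 2) := by ring
      nlinarith [mul_le_mul_of_nonneg_right t1 hy0.le,
        mul_nonneg (mul_nonneg (sub_nonneg.2 hxy.le) hNpos.le) (by linarith : (0:ℝ) ≤ x + 2)]
    calc lam * (k:ℝ) * y^2 * (x+1) ≤ Δ * N * (x+1) :=
          mul_le_mul_of_nonneg_right t2 (by linarith)
      _ = D * N := by rw [hDdef]; ring
  have hk2 : (k:ℝ)^(6*lam-α-2) * (k:ℝ)^2 = (k:ℝ)^(6*lam-α) := by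
    rw [← Real.rpow_natCast (k:ℝ) 2, ← Real.rpow_add hkpos]; norm_num
  have hkey := key1 lam α hl1 hl2 ha1 ha2 n k hk
  have big : ((n:ℝ)^α + 1) * (lam^2 * (k:ℝ)^(6*lam-α)) * N^2 ≤ (2*D^2) * N^2 := by
    calc ((n:ℝ)^α + 1) * (lam^2 * (k:ℝ)^(6*lam-α)) * N^2
        = (((n:ℝ)^α + 1) * ((k:ℝ)^(6*lam-α-2)) * N^2) * (lam^2 * (k:ℝ)^2) := by
          rw [← hk2]; ring
      _ ≤ (2 * (x+1)^2 * (y^4)) * (lam^2 * (k:ℝ)^2) := by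
          apply mul_le_mul_of_nonneg_right _ (by positivity)
          exact hkey
      _ = 2 * (lam * (k:ℝ) * y^2 * (x+1))^2 := by ring
      _ ≤ 2 * (D*N)^2 := by
          have h0 : 0 ≤ lam * (k:ℝ) * y^2 * (x+1) := by positivity
          nlinarith [pow_le_pow_left₀ h0 hD 2]
      _ = (2*D^2) * N^2 := by ring
  have goal' : ((n:ℝ)^α + 1) * (lam^2 * (k:ℝ)^(6*lam-α)) ≤ 2 * D^2 := by
    have hN2 : (0:ℝ) < N^2 := by positivity
    have := (mul_le_mul_iff_of_pos_right hN2).1 big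
    linarith
  have hden : 0 < lam^2 * (k:ℝ)^(6*lam-α) := by positivity
  have hfin : ((n:ℝ)^α + 1) / D^2 ≤ 2 / (lam^2 * (k:ℝ)^(6*lam-α)) := by
    rw [div_le_div_iff₀ (by positivity) hden]
    linarith [goal']
  have hrhs : (Real.sqrt 2 / lam * ((k:ℝ)^(3*lam - α/2))⁻¹)^2
      = 2 / (lam^2 * (k:ℝ)^(6*lam-α)) := by
    have hp2 : ((k:ℝ)^(3*lam - α/2))^2 = (k:ℝ)^(6*lam-α) := by
      rw [← Real.rpow_natCast ((k:ℝ)^(3*lam - α/2)) 2, ← Real.rpow_mul hkpos.le]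
      ring_nf
    rw [mul_pow, div_pow, Real.sq_sqrt (by norm_num : (0:ℝ) ≤ 2), inv_pow, hp2]
    field_simp
  rw [hrhs]
  exact hfin

set_option maxHeartbeats 1000000 in
lemma term_bound (lam α : ℝ) (hl1 : 3/4 < lam) (hl2 : lam < 1)
    (ha1 : 1 + 2*lam < α) (ha2 : α < 6*lam - 2)
    (n m k : ℕ) (hn : 1 ≤ n) (hmk : m + k = n) (hk : 1 ≤ k) :
    ((n:ℝ)^α + 1) /
      (Real.rpow ((m:ℝ)^lam + 1) 1 * (((n:ℝ)^lam + 1)^2 - ((m:ℝ)^lam + 1)^2))^2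
      ≤ 8/(lam^2 * ((m:ℝ)^lam + 1)^2) + 8/(lam^2 * (k:ℝ)^2) := by
  have hl0 : 0 < lam := by linarith
  have hkpos : (0:ℝ) < k := by exact_mod_cast hk
  have hnpos : (0:ℝ) < n := by exact_mod_cast hn
  have hn1 : (1:ℝ) ≤ n := by exact_mod_cast hn
  have hmn : m < n := by omega
  have hmnR : (m:ℝ) < n := by exact_mod_cast hmn
  have hm0 : (0:ℝ) ≤ m := Nat.cast_nonneg m
  rw [show Real.rpow ((m:ℝ)^lam + 1) 1 = ((m:ℝ)^lam + 1) from Real.rpow_one _]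
  set x : ℝ := (m:ℝ)^lam with hxdef
  set z : ℝ := (n:ℝ)^lam with hzdef
  have hx0 : 0 ≤ x := Real.rpow_nonneg hm0 _
  have hz1 : 1 ≤ z := Real.one_le_rpow hn1 hl0.le
  have hxz : x < z := Real.rpow_lt_rpow hm0 hmnR hl0
  set Δ : ℝ := (z+1)^2 - (x+1)^2 with hΔdef
  have hΔpos : 0 < Δ := by nlinarith
  set P : ℝ := (x+1) * Δ with hPdef
  have hPpos : 0 < P := by positivity
  -- tangent bound
  have t1 : lam * (k:ℝ) * z ≤ (z - x) * n := by
    have h := tangent lam hl0 hl2.le hm0 hmnR.le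
    have hsub : (n:ℝ) - (m:ℝ) = (k:ℝ) := by
      have : (m:ℝ) + (k:ℝ) = (n:ℝ) := by exact_mod_cast hmk
      linarith
    rw [hsub] at h
    exact h
  have hPn : lam * (k:ℝ) * z^2 * (x+1) ≤ P * n := by
    have t2 : lam * (k:ℝ) * z^2 ≤ Δ * n := by
      nlinarith [mul_le_mul_of_nonneg_right t1 (by linarith : (0:ℝ) ≤ z),
        mul_nonneg (mul_nonneg (sub_nonneg.2 hxz.le) hnpos.le) (by linarith : (0:ℝ) ≤ x + 2)]
    calc lam * (k:ℝ) * z^2 * (x+1) ≤ Δ * n * (x+1) :=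
          mul_le_mul_of_nonneg_right t2 (by linarith)
      _ = P * n := by rw [hPdef]; ring
  have hPn2 : lam^2 * (k:ℝ)^2 * z^4 * (x+1)^2 ≤ P^2 * (n:ℝ)^2 := by
    have h0 : 0 ≤ lam * (k:ℝ) * z^2 * (x+1) := by positivity
    nlinarith [pow_le_pow_left₀ h0 hPn 2]
  -- rpow facts
  have hz4 : (n:ℝ)^α ≤ z^4 := by
    have : (n:ℝ)^α ≤ (n:ℝ)^(lam*4) := Real.rpow_le_rpow_of_exponent_le hn1 (by linarith)
    calc (n:ℝ)^α ≤ (n:ℝ)^(lam*4) := this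
      _ = z^4 := by rw [hzdef, ← Real.rpow_natCast ((n:ℝ)^lam) 4, ← Real.rpow_mul hnpos.le]; norm_num
  have hz1' : (1:ℝ) ≤ z^4 := one_le_pow₀ hz1
  have hz6 : (n:ℝ)^α * (n:ℝ)^2 ≤ z^6 := by
    have e : (n:ℝ)^α * (n:ℝ)^2 = (n:ℝ)^(α+2) := by
      rw [← Real.rpow_natCast (n:ℝ) 2, ← Real.rpow_add hnpos]; norm_num
    rw [e]
    have : (n:ℝ)^(α+2) ≤ (n:ℝ)^(lam*6) := Real.rpow_le_rpow_of_exponent_le hn1 (by linarith)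
    calc (n:ℝ)^(α+2) ≤ (n:ℝ)^(lam*6) := this
      _ = z^6 := by rw [hzdef, ← Real.rpow_natCast ((n:ℝ)^lam) 6, ← Real.rpow_mul hnpos.le]; norm_num
  have hn2 : (1:ℝ) ≤ (n:ℝ)^2 := one_le_pow₀ hn1
  -- case split
  have hcase : n ≤ 2*k ∨ n ≤ 2*m := by omega
  have hP2 : (0:ℝ) < P^2 := by positivity
  rcases hcase with hc | hc
  · -- show ≤ first term
    have hcR : (n:ℝ) ≤ 2*(k:ℝ) := by exact_mod_cast hc
    have hA : ((n:ℝ)^α + 1) * (n:ℝ)^2 ≤ 8 * (k:ℝ)^2 * z^4 := by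
      have h1 : ((n:ℝ)^α + 1) ≤ 2 * z^4 := by linarith
      have h2 : (n:ℝ)^2 ≤ 4*(k:ℝ)^2 := by nlinarith [hcR, hnpos, hkpos]
      have h3 := mul_le_mul h1 h2 (by positivity) (by positivity)
      linarith [h3]
    have key : ((n:ℝ)^α + 1) * (lam^2 * (x+1)^2) ≤ 8 * P^2 := by
      have hN2 : (0:ℝ) < (n:ℝ)^2 := by positivity
      have big : ((n:ℝ)^α + 1) * (lam^2 * (x+1)^2) * (n:ℝ)^2 ≤ (8 * P^2) * (n:ℝ)^2 := by
        calc ((n:ℝ)^α + 1) * (lam^2 * (x+1)^2) * (n:ℝ)^2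
            = (((n:ℝ)^α + 1) * (n:ℝ)^2) * (lam^2 * (x+1)^2) := by ring
          _ ≤ (8 * (k:ℝ)^2 * z^4) * (lam^2 * (x+1)^2) := by
              apply mul_le_mul_of_nonneg_right hA (by positivity)
          _ = 8 * (lam^2 * (k:ℝ)^2 * z^4 * (x+1)^2) := by ring
          _ ≤ 8 * (P^2 * (n:ℝ)^2) := by linarith
          _ = (8 * P^2) * (n:ℝ)^2 := by ring
      exact (mul_le_mul_iff_of_pos_right hN2).1 big
    have h1 : ((n:ℝ)^α + 1) / P^2 ≤ 8/(lam^2 * (x+1)^2) := by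
      rw [div_le_div_iff₀ hP2 (by positivity)]
      linarith
    have h2 : (0:ℝ) ≤ 8/(lam^2 * (k:ℝ)^2) := by positivity
    linarith
  · have hcR : (n:ℝ) ≤ 2*(m:ℝ) := by exact_mod_cast hc
    -- x + 1 ≥ z/2 : m ≥ n/2 so m^lam ≥ (n/2)^lam = n^lam/2^lam ≥ z/2
    have hxz2 : z ≤ 2*(x+1) := by
      have h1 : ((n:ℝ)/2)^lam ≤ x := by
        rw [hxdef]
        exact Real.rpow_le_rpow (by positivity) (by linarith) hl0.le
      have h2 : ((n:ℝ)/2)^lam = (n:ℝ)^lam / (2:ℝ)^lam := Real.div_rpow hnpos.le (by norm_num) lam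
      have h3 : (2:ℝ)^lam ≤ 2 := by
        calc (2:ℝ)^lam ≤ (2:ℝ)^(1:ℝ) := Real.rpow_le_rpow_of_exponent_le one_le_two hl2.le
          _ = 2 := Real.rpow_one 2
      have h4 : (n:ℝ)^lam / 2 ≤ (n:ℝ)^lam / (2:ℝ)^lam := by
        apply div_le_div_of_nonneg_left (Real.rpow_nonneg hnpos.le lam) (by positivity) h3
      have h5 : z / 2 ≤ x := by rw [hzdef]; linarith [h2 ▸ h1]
      linarith
    have hz6' : (n:ℝ)^2 ≤ z^6 := by
      have e : ((n:ℝ))^2 = (n:ℝ)^((2:ℕ):ℝ) := (Real.rpow_natCast (n:ℝ) 2).symm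
      rw [e]
      calc (n:ℝ)^((2:ℕ):ℝ) ≤ (n:ℝ)^(lam*6) := by
            apply Real.rpow_le_rpow_of_exponent_le hn1
            push_cast; linarith
        _ = z^6 := by rw [hzdef, ← Real.rpow_natCast ((n:ℝ)^lam) 6, ← Real.rpow_mul hnpos.le]; norm_num
    have hB : ((n:ℝ)^α + 1) * (n:ℝ)^2 ≤ 2 * z^6 := by nlinarith [hz6, hz6']
    have key : ((n:ℝ)^α + 1) * (lam^2 * (k:ℝ)^2) ≤ 8 * P^2 := by
      have hN2 : (0:ℝ) < (n:ℝ)^2 := by positivity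
      have hz2x : z^2 ≤ 4*(x+1)^2 := by nlinarith [hz1]
      have big : ((n:ℝ)^α + 1) * (lam^2 * (k:ℝ)^2) * (n:ℝ)^2 ≤ (8 * P^2) * (n:ℝ)^2 := by
        calc ((n:ℝ)^α + 1) * (lam^2 * (k:ℝ)^2) * (n:ℝ)^2
            = (((n:ℝ)^α + 1) * (n:ℝ)^2) * (lam^2 * (k:ℝ)^2) := by ring
          _ ≤ (2 * z^6) * (lam^2 * (k:ℝ)^2) := by
              apply mul_le_mul_of_nonneg_right hB (by positivity)
          _ = 2 * (lam^2 * (k:ℝ)^2 * z^4) * z^2 := by ring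
          _ ≤ 2 * (lam^2 * (k:ℝ)^2 * z^4) * (4*(x+1)^2) := by
              apply mul_le_mul_of_nonneg_left hz2x (by positivity)
          _ = 8 * (lam^2 * (k:ℝ)^2 * z^4 * (x+1)^2) := by ring
          _ ≤ 8 * (P^2 * (n:ℝ)^2) := by linarith
          _ = (8 * P^2) * (n:ℝ)^2 := by ring
      exact (mul_le_mul_iff_of_pos_right hN2).1 big
    have h1 : ((n:ℝ)^α + 1) / P^2 ≤ 8/(lam^2 * (k:ℝ)^2) := by
      rw [div_le_div_iff₀ hP2 (by positivity)]
      linarith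
    have h2 : (0:ℝ) ≤ 8/(lam^2 * (x+1)^2) := by positivity
    linarith

lemma sum_helper2 (lam : ℝ) (hl1 : 3/4 < lam) (hl2 : lam < 1) :
    Summable (fun m : ℕ => 1/(((m:ℝ)^lam+1)^2)) := by
  have hl0 : 0 < lam := by linarith
  apply sum_helper 1 (lam*2) (by linarith)
  · intro n; positivity
  · intro n hn
    have hn1 : (1:ℝ) ≤ n := by exact_mod_cast hn
    have hnpos : (0:ℝ) < n := by linarith
    have e2 : ((n:ℝ)^lam)^2 = (n:ℝ)^(lam*2) := by
      rw [← Real.rpow_natCast ((n:ℝ)^lam) 2, ← Real.rpow_mul hnpos.le]; norm_num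
    rw [one_div, one_mul]
    apply inv_anti₀ (by positivity)
    nlinarith [e2, Real.rpow_nonneg hnpos.le lam]

lemma sum_helper3 : Summable (fun k : ℕ => 1/((k:ℝ)^2)) := by
  apply sum_helper 1 (2:ℝ) (by norm_num)
  · intro n; positivity
  · intro n hn
    have e : ((n:ℝ)^((2:ℝ)))⁻¹ = 1/(n:ℝ)^2 := by
      rw [show ((2:ℝ)) = ((2:ℕ):ℝ) by norm_num, Real.rpow_natCast, one_div]
    rw [one_mul, e]

lemma memK' (lam : ℝ) (hl1 : 3/4 < lam) (hl2 : lam < 1) :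
    MemKminus (fun n : ℕ => (n:ℝ)^lam + 1) := by
  have hl0 : 0 < lam := by linarith
  refine ⟨⟨by positivity, ?_⟩, ?_⟩
  · intro n
    show (n:ℝ)^lam + 1 < ((n+1:ℕ):ℝ)^lam + 1
    have : (n:ℝ)^lam < ((n+1:ℕ):ℝ)^lam :=
      Real.rpow_lt_rpow (Nat.cast_nonneg n) (by exact_mod_cast Nat.lt_succ_self n) hl0
    linarith
  · have := sum_helper2 lam hl1 hl2
    simpa [one_div] using this

set_option maxHeartbeats 1000000 in
lemma main' (lam α : ℝ) (hl1 : 3/4 < lam) (hl2 : lam < 1)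
    (ha1 : 1 + 2*lam < α) (ha2 : α < 6*lam - 2) :
    ∃ h : ℕ → ℝ,
      MWitness 1 (fun n : ℕ => (n:ℝ)^lam + 1) (fun n : ℕ => (n:ℝ)^α + 1) h ∧
      ∃ C : ℝ, 0 < C ∧ ∀ n : ℕ,
        (∑ k ∈ Finset.Icc 1 n,
          ((n:ℝ)^α + 1) /
            (Real.rpow (((n - k : ℕ):ℝ)^lam + 1) 1 *
              (((n:ℝ)^lam + 1)^2 - (((n - k : ℕ):ℝ)^lam + 1)^2))^2) < C := by
  have hl0 : 0 < lam := by linarith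
  have ha0 : 0 < α := by linarith
  refine ⟨fun k => Real.sqrt 2 / lam * ((k:ℝ)^(3*lam - α/2))⁻¹, ⟨?_, ?_, ?_, ?_⟩, ?_⟩
  · intro n
    show (0:ℝ) < (n:ℝ)^α + 1
    positivity
  · have hs : Summable (fun k : ℕ => |Real.sqrt 2 / lam * ((k:ℝ)^(3*lam-α/2))⁻¹|) := by
      apply sum_helper (Real.sqrt 2 / lam) (3*lam-α/2) (by linarith)
      · intro n; exact abs_nonneg _
      · intro n hn
        rw [abs_of_nonneg (by positivity)]
    exact (summable_nat_add_iff 1).2 hs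
  · apply sum_helper 4 (α-2*lam) (by linarith)
    · intro n
      show (0:ℝ) ≤ ((n:ℝ)^lam + 1)^2 / ((n:ℝ)^α + 1)
      positivity
    · intro n hn
      have hn1 : (1:ℝ) ≤ n := by exact_mod_cast hn
      have hnpos : (0:ℝ) < n := by linarith
      have hnl1 : (1:ℝ) ≤ (n:ℝ)^lam := Real.one_le_rpow hn1 hl0.le
      have e2 : ((n:ℝ)^lam)^2 = (n:ℝ)^(2*lam) := by
        rw [← Real.rpow_natCast ((n:ℝ)^lam) 2, ← Real.rpow_mul hnpos.le]; ring_nf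
      have e3 : ((n:ℝ)^(α-2*lam))⁻¹ * (n:ℝ)^α = (n:ℝ)^(2*lam) := by
        rw [← Real.rpow_neg hnpos.le, ← Real.rpow_add hnpos]; ring_nf
      have hinv : (0:ℝ) ≤ ((n:ℝ)^(α-2*lam))⁻¹ := by positivity
      show ((n:ℝ)^lam + 1)^2 / ((n:ℝ)^α + 1) ≤ 4 * ((n:ℝ)^(α-2*lam))⁻¹
      rw [div_le_iff₀ (by positivity)]
      have h4 : ((n:ℝ)^lam+1)^2 ≤ 4*(n:ℝ)^(2*lam) := by nlinarith [e2, hnl1]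
      calc ((n:ℝ)^lam+1)^2 ≤ 4*(n:ℝ)^(2*lam) := h4
        _ = 4*(((n:ℝ)^(α-2*lam))⁻¹ * (n:ℝ)^α) := by rw [e3]
        _ ≤ 4*((n:ℝ)^(α-2*lam))⁻¹ * ((n:ℝ)^α + 1) := by nlinarith [hinv]
  · intro n k hk
    exact cond4 lam α hl1 hl2 ha1 ha2 n k hk
  · have hFsum := sum_helper2 lam hl1 hl2
    have hGsum := sum_helper3
    set A : ℝ := ∑' m : ℕ, 1/(((m:ℝ)^lam+1)^2) with hAdef
    set B : ℝ := ∑' k : ℕ, 1/((k:ℝ)^2) with hBdef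
    have hA0 : 0 ≤ A := tsum_nonneg (fun m => by positivity)
    have hB0 : 0 ≤ B := tsum_nonneg (fun k => by positivity)
    have h8 : (0:ℝ) ≤ 8/lam^2 * (A+B) :=
      mul_nonneg (by positivity) (by linarith)
    refine ⟨8/lam^2 * (A+B) + 1, by linarith, ?_⟩
    intro n
    rcases Nat.eq_zero_or_pos n with rfl | hn
    · rw [show Finset.Icc 1 0 = (∅ : Finset ℕ) from Finset.Icc_eq_empty (by omega),
        Finset.sum_empty]
      linarith
    · have step1 : (∑ k ∈ Finset.Icc 1 n,
          ((n:ℝ)^α + 1) /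
            (Real.rpow (((n - k : ℕ):ℝ)^lam + 1) 1 *
              (((n:ℝ)^lam + 1)^2 - (((n - k : ℕ):ℝ)^lam + 1)^2))^2)
          ≤ ∑ k ∈ Finset.Icc 1 n,
            (8/(lam^2*(((n-k:ℕ):ℝ)^lam+1)^2) + 8/(lam^2*(k:ℝ)^2)) := by
        apply Finset.sum_le_sum
        intro k hkmem
        rw [Finset.mem_Icc] at hkmem
        exact term_bound lam α hl1 hl2 ha1 ha2 n (n-k) k hn (by omega) hkmem.1
      rw [Finset.sum_add_distrib] at step1
      have e1 : ∑ k ∈ Finset.Icc 1 n, 8/(lam^2*(((n-k:ℕ):ℝ)^lam+1)^2)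
          = ∑ m ∈ Finset.range n, 8/(lam^2*((m:ℝ)^lam+1)^2) := by
        apply Finset.sum_nbij' (fun k => n - k) (fun m => n - m)
        · intro a ha; rw [Finset.mem_Icc] at ha; rw [Finset.mem_range]; omega
        · intro a ha; rw [Finset.mem_range] at ha; rw [Finset.mem_Icc]; omega
        · intro a ha; rw [Finset.mem_Icc] at ha; omega
        · intro a ha; rw [Finset.mem_range] at ha; omega
        · intro a _; rfl
      have b1 : ∑ m ∈ Finset.range n, 8/(lam^2*((m:ℝ)^lam+1)^2) ≤ 8/lam^2 * A := by
        have hcong : ∀ m : ℕ, 8/(lam^2*((m:ℝ)^lam+1)^2) = 8/lam^2 * (1/(((m:ℝ)^lam+1)^2)) := by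
          intro m; rw [div_mul_div_comm, mul_one]
        calc ∑ m ∈ Finset.range n, 8/(lam^2*((m:ℝ)^lam+1)^2)
            = ∑ m ∈ Finset.range n, 8/lam^2 * (1/(((m:ℝ)^lam+1)^2)) :=
              Finset.sum_congr rfl (fun m _ => hcong m)
          _ = 8/lam^2 * ∑ m ∈ Finset.range n, (1/(((m:ℝ)^lam+1)^2)) := by
              rw [Finset.mul_sum]
          _ ≤ 8/lam^2 * A := by
              apply mul_le_mul_of_nonneg_left _ (by positivity)
              exact Summable.sum_le_tsum _ (fun i _ => by positivity) hFsum
      have b2 : ∑ k ∈ Finset.Icc 1 n, 8/(lam^2*(k:ℝ)^2) ≤ 8/lam^2 * B := by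
        have hcong : ∀ k : ℕ, 8/(lam^2*(k:ℝ)^2) = 8/lam^2 * (1/((k:ℝ)^2)) := by
          intro k; rw [div_mul_div_comm, mul_one]
        calc ∑ k ∈ Finset.Icc 1 n, 8/(lam^2*(k:ℝ)^2)
            = ∑ k ∈ Finset.Icc 1 n, 8/lam^2 * (1/((k:ℝ)^2)) :=
              Finset.sum_congr rfl (fun k _ => hcong k)
          _ = 8/lam^2 * ∑ k ∈ Finset.Icc 1 n, (1/((k:ℝ)^2)) := by rw [Finset.mul_sum]
          _ ≤ 8/lam^2 * B := by
              apply mul_le_mul_of_nonneg_left _ (by positivity)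
              exact Summable.sum_le_tsum _ (fun i _ => by positivity) hGsum
      rw [e1] at step1
      linarith

/-- Let `λ ∈ (3/4, 1)` and `f n = n^λ + 1`. Then `f ∈ 𝓜_s(1)`; in fact, for
any `α ∈ (1 + 2λ, 6λ - 2)` the function `g n = n^α + 1` witnesses the defining conditions of
`𝓜_s(1)`. -/
theorem stmt15 (lam : ℝ) (hlam1 : 3 / 4 < lam) (hlam2 : lam < 1) :
    MemMs 1 (fun n : ℕ => (n : ℝ) ^ lam + 1) ∧
    ∀ α : ℝ, 1 + 2 * lam < α → α < 6 * lam - 2 →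
      ∃ h : ℕ → ℝ,
        MWitness 1 (fun n : ℕ => (n : ℝ) ^ lam + 1) (fun n : ℕ => (n : ℝ) ^ α + 1) h ∧
        ∃ C : ℝ, 0 < C ∧ ∀ n : ℕ,
          (∑ k ∈ Finset.Icc 1 n,
            ((n : ℝ) ^ α + 1) /
              (Real.rpow (((n - k : ℕ) : ℝ) ^ lam + 1) 1 *
                (((n : ℝ) ^ lam + 1) ^ 2 - (((n - k : ℕ) : ℝ) ^ lam + 1) ^ 2)) ^ 2) < C := by
  constructor
  · refine ⟨memK' lam hlam1 hlam2, (fun n : ℕ => (n:ℝ)^(4*lam - 1/2) + 1), ?_⟩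
    obtain ⟨h, hw, C, hC⟩ := main' lam (4*lam - 1/2) hlam1 hlam2 (by linarith) (by linarith)
    exact ⟨h, hw, C, hC⟩
  · intro α hα1 hα2
    exact main' lam α hlam1 hlam2 hα1 hα2
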